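/- Define H_VI(q,p,t; ϑ₀,ϑ_t,ϑ₁,ϑ∞) = (1/(t(t−1)))·[ q(q−1)(q−t)p² − (ϑ₀(q−1)(q−t) + ϑ₁·q(q−t) + (ϑ_t−1)·q(q−1))·p + (((ϑ₀+ϑ₁+ϑ_t−1)² − ϑ∞²)/4)·(q−t) ] and H_{VI,ε}(q,p,t̃; ϑ₀,ϑ̃₁,ϑ∞) = (1/(t̃(1+εt̃)))·[ q(q−1)(q−1−εt̃)p² − (ϑ₀(q−1)(q−1−εt̃) + ϑ̃₁·q(q−1−εt̃) + t̃q − εt̃q)·p + (((ϑ₀+ϑ̃₁)² − ϑ∞²)/4)·(q−1−εt̃) ]. Then for all q, p, t̃, ε, ϑ₀, ϑ̃₁, ϑ∞ ∈ ℂ with ε ≠ 0, t̃ ≠ 0 and 1+εt̃ ≠ 0: ε·H_VI(q, p, 1+εt̃; ϑ₀, 1/ε, −1/ε+ϑ̃₁+1, ϑ∞) = H_{VI,ε}(q, p, t̃; ϑ₀, ϑ̃₁, ϑ∞). -/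

import Mathlib

/-- Okamoto's polynomial Hamiltonian of the sixth Painlevé equation. -/
noncomputable def HVI (th0 tht th1 thinf : ℂ) (q p t : ℂ) : ℂ :=
  (1 / (t * (t - 1))) *
    (q * (q - 1) * (q - t) * p ^ 2 -
      (th0 * (q - 1) * (q - t) + th1 * q * (q - t) + (tht - 1) * q * (q - 1)) * p +
      (((th0 + th1 + tht - 1) ^ 2 - thinf ^ 2) / 4) * (q - t))

/-- The confluent family of Painlevé VI Hamiltonians. -/
noncomputable def HVIe (th0 th1t thinf : ℂ) (q p tt ε : ℂ) : ℂ :=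
  (1 / (tt * (1 + ε * tt))) *
    (q * (q - 1) * (q - 1 - ε * tt) * p ^ 2 -
      (th0 * (q - 1) * (q - 1 - ε * tt) + th1t * q * (q - 1 - ε * tt) +
        tt * q - ε * tt * q) * p +
      (((th0 + th1t) ^ 2 - thinf ^ 2) / 4) * (q - 1 - ε * tt))

/-- **Confluence substitution in the Painlevé VI Hamiltonian.**
Under `t = 1 + εt̃`, `ϑ_t = 1/ε`, `ϑ₁ = −1/ε + ϑ̃₁ + 1`, the rescaled sixth Painlevé
Hamiltonian `ε·H_VI` equals the confluent family `H_{VI,ε}`. -/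
theorem HVI_confluence_substitution
    (q p tt ε th0 th1t thinf : ℂ)
    (hε : ε ≠ 0) (htt : tt ≠ 0) (ht : 1 + ε * tt ≠ 0) :
    ε * HVI th0 (1 / ε) (-(1 / ε) + th1t + 1) thinf q p (1 + ε * tt) =
      HVIe th0 th1t thinf q p tt ε := by
  unfold HVI HVIe
  rw [show (1 + ε * tt) - 1 = ε * tt from by ring, ← mul_assoc,
    show ε * (1 / ((1 + ε * tt) * (ε * tt))) = 1 / (tt * (1 + ε * tt)) from by
      field_simp]
  congr 1
  field_simp
  ring
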